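/- For every simple type A over base types B, if every base type is interpreted as an inhabited compatible relation with well-founded strict order, then the interpretation ⟦A⟧ (base types to their interpretations, arrow types to weakly monotone function spaces with pointwise orders) is inhabited and its strict order is well-founded. -/
import Mathlib


structure CompatRel where
  carrier : Type
  gt : carrier → carrier → Prop
  ge : carrier → carrier → Prop

structure isCompatRel (X : CompatRel) : Prop where
  ge_trans : ∀ {x y z : X.carrier}, X.ge x y → X.ge y z → X.ge x z
  ge_refl : ∀ x : X.carrier, X.ge x x
  compat : ∀ {x y : X.carrier}, X.gt x y → X.ge x y
  ge_gt : ∀ {x y z : X.carrier}, X.ge x y → X.gt y z → X.gt x z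
  gt_ge : ∀ {x y z : X.carrier}, X.gt x y → X.ge y z → X.gt x z

structure weakMonotoneMap (X Y : CompatRel) where
  f : X.carrier → Y.carrier
  mono : ∀ x y : X.carrier, X.ge x y → Y.ge (f x) (f y)

def funCompatRel (X Y : CompatRel) : CompatRel where
  carrier := weakMonotoneMap X Y
  gt f g := ∀ x : X.carrier, Y.gt (f.f x) (g.f x)
  ge f g := ∀ x : X.carrier, Y.ge (f.f x) (g.f x)

def prodCompatRel (X Y : CompatRel) : CompatRel where
  carrier := X.carrier × Y.carrier
  gt x y := X.gt x.1 y.1 ∧ Y.gt x.2 y.2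
  ge x y := X.ge x.1 y.1 ∧ Y.ge x.2 y.2

inductive isWf {X : Type} (R : X → X → Prop) : X → Prop
  | acc : ∀ {x : X}, (∀ y : X, R x y → isWf R y) → isWf R x

def Wf {X : Type} (R : X → X → Prop) : Prop := ∀ x : X, isWf R x

inductive Ty (B : Type) : Type
  | Base : B → Ty B
  | Fun : Ty B → Ty B → Ty B

def semTy' {B : Type} (semB : B → CompatRel) : Ty B → CompatRel
  | .Base b => semB b
  | .Fun A1 A2 => funCompatRel (semTy' semB A1) (semTy' semB A2)


lemma semTy_compat {B : Type} (semB : B → CompatRel)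
    (hcompat : ∀ b : B, isCompatRel (semB b)) (A : Ty B) :
    isCompatRel (semTy' semB A) := by
  induction A with
  | Base b => exact hcompat b
  | Fun A1 A2 ih1 ih2 =>
    exact {
      ge_trans := fun h1 h2 x => ih2.ge_trans (h1 x) (h2 x)
      ge_refl := fun f x => ih2.ge_refl _
      compat := fun h x => ih2.compat (h x)
      ge_gt := fun h1 h2 x => ih2.ge_gt (h1 x) (h2 x)
      gt_ge := fun h1 h2 x => ih2.gt_ge (h1 x) (h2 x) }

lemma isWf_pullback {X Y : Type} {R : X → X → Prop} {S : Y → Y → Prop}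
    (φ : X → Y) (h : ∀ a b, R a b → S (φ a) (φ b)) :
    ∀ {y : Y}, isWf S y → ∀ x : X, φ x = y → isWf R x := by
  intro y hy
  induction hy with
  | acc hs ih =>
    intro x hx
    exact isWf.acc (fun z hz => ih (φ z) (hx ▸ h x z hz) z rfl)

theorem semTy_inhabited_and_wf {B : Type} (semB : B → CompatRel)
    (hcompat : ∀ b : B, isCompatRel (semB b))
    (hinhab : ∀ b : B, Nonempty (semB b).carrier)
    (hwf : ∀ b : B, Wf (semB b).gt)
    (A : Ty B) :
    Nonempty (semTy' semB A).carrier ∧ Wf (semTy' semB A).gt := by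
  induction A with
  | Base b => exact ⟨hinhab b, hwf b⟩
  | Fun A1 A2 ih1 ih2 =>
    obtain ⟨⟨x0⟩, _⟩ := ih1
    obtain ⟨⟨y0⟩, wf2⟩ := ih2
    constructor
    · exact ⟨⟨fun _ => y0, fun _ _ _ => (semTy_compat semB hcompat A2).ge_refl y0⟩⟩
    · intro f
      exact isWf_pullback (fun g : (semTy' semB (Ty.Fun A1 A2)).carrier => g.f x0)
        (fun a b h => h x0) (wf2 (f.f x0)) f rfl
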